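/- Let (w_t)_{t≤T} be a sequence of random variables adapted to a filtration (H_t)_{t≤T} with 0 ≤ w_t ≤ R almost surely. Then with probability at least 1 − δ, both ∑_{t=1}^T w_t ≤ (3/2) ∑_{t=1}^T E[w_t | H_{t−1}] + 4R log(2/δ) and ∑_{t=1}^T E[w_t | H_{t−1}] ≤ 2 ∑_{t=1}^T w_t + 8R log(2/δ). -/

import Mathlib

open MeasureTheory Finset

lemma exp_convex_bound (c t : ℝ) (ht : t ∈ Set.Icc (0:ℝ) 1) :
    Real.exp (t * c) ≤ 1 + t * (Real.exp c - 1) := by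
  have h := convexOn_exp.2 (Set.mem_univ (0:ℝ)) (Set.mem_univ c)
    (by linarith [ht.2] : (0:ℝ) ≤ 1 - t) ht.1 (by ring)
  simp only [smul_eq_mul, mul_zero, zero_add, Real.exp_zero, mul_one] at h
  linarith [h]

lemma exp_quarter_le : Real.exp (1/4 : ℝ) ≤ 4/3 := by
  have h := Real.add_one_le_exp (-(1/4) : ℝ)
  rw [Real.exp_neg] at h
  have hp := Real.exp_pos (1/4 : ℝ)
  rw [inv_eq_one_div, le_div_iff₀ hp] at h
  linarith

lemma exp_neg_quarter_le : Real.exp (-(1/4) : ℝ) ≤ 4/5 := by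
  have h := Real.add_one_le_exp (1/4 : ℝ)
  rw [Real.exp_neg]
  have hp := Real.exp_pos (1/4 : ℝ)
  rw [inv_le_iff_one_le_mul₀ hp]
  nlinarith

lemma key_mgf {Ω : Type*} {m0 : MeasurableSpace Ω} (μ : Measure Ω)
    [IsProbabilityMeasure μ] (ℱ : Filtration ℕ m0) (R : ℝ) (hR : 0 < R)
    (w : ℕ → Ω → ℝ)
    (hadapted : ∀ t, Measurable[ℱ t] (w t))
    (hbdd : ∀ t, ∀ᵐ ω ∂μ, w t ω ∈ Set.Icc 0 R)
    (a b : ℝ)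
    (hab : ∀ x ∈ Set.Icc (0:ℝ) R, Real.exp (a * x) ≤ 1 + (-b) * x) :
    ∀ T : ℕ, ∫ ω, Real.exp (a * ∑ t ∈ Icc 1 T, w t ω
        + b * ∑ t ∈ Icc 1 T, (μ[w t | ℱ (t-1)]) ω) ∂μ ≤ 1 := by
  have hwm : ∀ t, Measurable (w t) := fun t => (hadapted t).mono (ℱ.le t) le_rfl
  have hwae : ∀ᵐ ω ∂μ, ∀ t, w t ω ∈ Set.Icc 0 R := ae_all_iff.2 hbdd
  have hw_int : ∀ t, Integrable (w t) μ := fun t =>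
    (integrable_const R).mono' (hwm t).aestronglyMeasurable
      ((hbdd t).mono fun ω h => by
        rw [Real.norm_eq_abs, abs_of_nonneg h.1]; exact h.2)
  set E : ℕ → Ω → ℝ := fun t => μ[w t | ℱ (t-1)] with hE
  have hEsm : ∀ t, StronglyMeasurable[ℱ (t-1)] (E t) := fun t => stronglyMeasurable_condExp
  have hEm : ∀ t, Measurable (E t) := fun t =>
    ((hEsm t).mono (ℱ.le (t-1))).measurable
  have hE_int : ∀ t, Integrable (E t) μ := fun t => integrable_condExp
  have hE_nonneg : ∀ t, 0 ≤ᵐ[μ] E t := fun t =>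
    condExp_nonneg ((hbdd t).mono fun ω h => h.1)
  have hE_le : ∀ t, E t ≤ᵐ[μ] fun _ => R := by
    intro t
    have h := condExp_mono (μ := μ) (m := ℱ (t-1)) (hw_int t) (integrable_const R)
      ((hbdd t).mono fun ω h => h.2)
    rwa [condExp_const (ℱ.le (t-1)) R] at h
  have hEae : ∀ᵐ ω ∂μ, ∀ t, 0 ≤ E t ω ∧ E t ω ≤ R :=
    ae_all_iff.2 fun t => (hE_nonneg t).and (hE_le t)
  set X : ℕ → Ω → ℝ := fun n ω => Real.exp (a * ∑ t ∈ Icc 1 n, w t ω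
        + b * ∑ t ∈ Icc 1 n, E t ω) with hX
  have hXm : ∀ n, Measurable (X n) := by
    intro n
    exact (Real.measurable_exp.comp
      (((Finset.measurable_sum _ (fun t _ => hwm t)).const_mul a).add
        ((Finset.measurable_sum _ (fun t _ => hEm t)).const_mul b)))
  have hsum_bdd : ∀ n, ∀ᵐ ω ∂μ, (0 ≤ ∑ t ∈ Icc 1 n, w t ω ∧ ∑ t ∈ Icc 1 n, w t ω ≤ n * R)
      ∧ (0 ≤ ∑ t ∈ Icc 1 n, E t ω ∧ ∑ t ∈ Icc 1 n, E t ω ≤ n * R) := by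
    intro n
    filter_upwards [hwae, hEae] with ω hw hE'
    have key : ∀ f : ℕ → Ω → ℝ, (∀ t, 0 ≤ f t ω ∧ f t ω ≤ R) →
        0 ≤ ∑ t ∈ Icc 1 n, f t ω ∧ ∑ t ∈ Icc 1 n, f t ω ≤ n * R := by
      intro f hf
      constructor
      · exact Finset.sum_nonneg fun t _ => (hf t).1
      · calc ∑ t ∈ Icc 1 n, f t ω ≤ ∑ t ∈ Icc 1 n, R :=
              Finset.sum_le_sum fun t _ => (hf t).2
          _ = n * R := by
              rw [Finset.sum_const, Nat.card_Icc, Nat.add_sub_cancel, nsmul_eq_mul]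
    exact ⟨key w (fun t => ⟨(hw t).1, (hw t).2⟩), key E hE'⟩
  have hXbdd : ∀ n, ∀ᵐ ω ∂μ, ‖X n ω‖ ≤ Real.exp ((|a| + |b|) * (n * R)) := by
    intro n
    filter_upwards [hsum_bdd n] with ω ⟨⟨h1, h2⟩, ⟨h3, h4⟩⟩
    rw [hX, Real.norm_eq_abs, Real.abs_exp, Real.exp_le_exp]
    have hnR : (0:ℝ) ≤ n * R := le_trans h1 h2
    nlinarith [le_abs_self a, neg_abs_le a, le_abs_self b, neg_abs_le b,
      mul_le_mul_of_nonneg_right (le_abs_self a) h1,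
      mul_le_mul_of_nonneg_right (le_abs_self b) h3,
      mul_le_mul_of_nonneg_left h2 (abs_nonneg a),
      mul_le_mul_of_nonneg_left h4 (abs_nonneg b)]
  have hX_int : ∀ n, Integrable (X n) μ := fun n =>
    (integrable_const _).mono' (hXm n).aestronglyMeasurable (hXbdd n)
  -- induction
  intro T
  induction T with
  | zero => simp
  | succ n ih =>
    have hstep : ∀ ω, X (n+1) ω =
        (Real.exp (a * ∑ t ∈ Icc 1 n, w t ω + b * ∑ t ∈ Icc 1 n, E t ω + b * E (n+1) ω))
          * Real.exp (a * w (n+1) ω) := by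
      intro ω
      show Real.exp (a * ∑ t ∈ Icc 1 (n+1), w t ω + b * ∑ t ∈ Icc 1 (n+1), E t ω) = _
      rw [← Real.exp_add, Finset.sum_Icc_succ_top (by omega : 1 ≤ n+1),
        Finset.sum_Icc_succ_top (by omega : 1 ≤ n+1)]
      ring_nf
    set G : Ω → ℝ := fun ω =>
      Real.exp (a * ∑ t ∈ Icc 1 n, w t ω + b * ∑ t ∈ Icc 1 n, E t ω + b * E (n+1) ω) with hG
    set f : Ω → ℝ := fun ω => Real.exp (a * w (n+1) ω) with hf
    have hGsm : StronglyMeasurable[ℱ n] G := by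
      apply Measurable.stronglyMeasurable
      apply Real.measurable_exp.comp
      apply Measurable.add
      apply Measurable.add
      · exact (Finset.measurable_sum _ (fun t ht => ((hadapted t).mono
          (ℱ.mono (by simp at ht; omega)) le_rfl))).const_mul a
      · refine (Finset.measurable_sum _ (fun t ht => ?_)).const_mul b
        exact ((hEsm t).mono (ℱ.mono (by simp at ht; omega))).measurable
      · have : StronglyMeasurable[ℱ ((n+1)-1)] (E (n+1)) := hEsm (n+1)
        simpa using (this.measurable.const_mul b)
    have hf_int : Integrable f μ := by
      refine (integrable_const (Real.exp (|a| * R))).mono'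
        ((Real.measurable_exp.comp ((hwm (n+1)).const_mul a)).aestronglyMeasurable) ?_
      filter_upwards [hbdd (n+1)] with ω hω
      rw [Real.norm_eq_abs, Real.abs_exp, Real.exp_le_exp]
      nlinarith [le_abs_self a, hω.1, hω.2, abs_nonneg a,
        mul_le_mul_of_nonneg_right (le_abs_self a) hω.1,
        mul_le_mul_of_nonneg_left hω.2 (abs_nonneg a)]
    have hGf_int : Integrable (G * f) μ := by
      have : (G * f) = X (n+1) := by funext ω; rw [Pi.mul_apply, hstep ω]
      rw [this]; exact hX_int (n+1)
    -- conditional expectation bound: μ[f | ℱ n] ≤ᵐ fun ω => Real.exp (-b * E (n+1) ω)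
    have hcond : μ[f | ℱ n] ≤ᵐ[μ] fun ω => Real.exp (-b * E (n+1) ω) := by
      have h1 : f ≤ᵐ[μ] fun ω => 1 + (-b) * w (n+1) ω := by
        filter_upwards [hbdd (n+1)] with ω hω
        exact hab _ hω
      have h2int : Integrable (fun ω => 1 + (-b) * w (n+1) ω) μ :=
        (integrable_const 1).add ((hw_int (n+1)).const_mul (-b))
      have h2 : μ[f | ℱ n] ≤ᵐ[μ] μ[fun ω => 1 + (-b) * w (n+1) ω | ℱ n] :=
        condExp_mono hf_int h2int h1
      have h3 : μ[fun ω => 1 + (-b) * w (n+1) ω | ℱ n]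
          =ᵐ[μ] fun ω => 1 + (-b) * E (n+1) ω := by
        have ha : (fun ω => 1 + (-b) * w (n+1) ω)
            = (fun _ => (1:ℝ)) + (-b) • (w (n+1)) := by
          funext ω; simp [smul_eq_mul]
        rw [ha]
        refine (condExp_add (integrable_const 1) ((hw_int (n+1)).smul (-b)) (ℱ n)).trans ?_
        have hc : μ[(fun _ => (1:ℝ))|ℱ n] = fun _ => (1:ℝ) := condExp_const (ℱ.le n) 1
        have hs := condExp_smul (μ := μ) (m := ℱ n) (-b) (w (n+1))
        filter_upwards [hs] with ω h2'
        have hn : (n+1) - 1 = n := by omega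
        simp only [Pi.add_apply, congrFun hc ω, h2', Pi.smul_apply, smul_eq_mul, hE, hn]
      refine h2.trans (h3.le.trans ?_)
      filter_upwards [] with ω
      have := Real.add_one_le_exp ((-b) * E (n+1) ω)
      simp only [neg_mul] at this ⊢
      linarith
    -- main chain
    have hchain : ∫ ω, X (n+1) ω ∂μ ≤ ∫ ω, X n ω ∂μ := by
      have heq : ∫ ω, X (n+1) ω ∂μ = ∫ ω, (μ[X (n+1) | ℱ n]) ω ∂μ :=
        (integral_condExp (ℱ.le n) (f := X (n+1))).symm
      rw [heq]
      refine integral_mono_ae integrable_condExp (hX_int n) ?_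
      have hpull : μ[X (n+1) | ℱ n] =ᵐ[μ] G * μ[f | ℱ n] := by
        have : X (n+1) = G * f := by funext ω; rw [Pi.mul_apply, hstep ω]
        rw [this]
        exact condExp_mul_of_stronglyMeasurable_left hGsm hGf_int hf_int
      filter_upwards [hpull, hcond] with ω h1 h2
      rw [h1, Pi.mul_apply]
      have hG0 : 0 ≤ G ω := (Real.exp_pos _).le
      calc G ω * (μ[f | ℱ n]) ω ≤ G ω * Real.exp (-b * E (n+1) ω) :=
            mul_le_mul_of_nonneg_left h2 hG0
        _ = X n ω := by rw [hG, hX, ← Real.exp_add]; ring_nf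
    exact hchain.trans ih

lemma key_markov {Ω : Type*} {m0 : MeasurableSpace Ω} (μ : Measure Ω)
    [IsProbabilityMeasure μ] (ℱ : Filtration ℕ m0) (R : ℝ) (hR : 0 < R)
    (w : ℕ → Ω → ℝ)
    (hadapted : ∀ t, Measurable[ℱ t] (w t))
    (hbdd : ∀ t, ∀ᵐ ω ∂μ, w t ω ∈ Set.Icc 0 R)
    (a b : ℝ)
    (hab : ∀ x ∈ Set.Icc (0:ℝ) R, Real.exp (a * x) ≤ 1 + (-b) * x)
    (T : ℕ) (L : ℝ) :
    μ {ω | L ≤ a * ∑ t ∈ Icc 1 T, w t ω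
        + b * ∑ t ∈ Icc 1 T, (μ[w t | ℱ (t-1)]) ω} ≤ ENNReal.ofReal (Real.exp (-L)) := by
  have hwm : ∀ t, Measurable (w t) := fun t => (hadapted t).mono (ℱ.le t) le_rfl
  have hEm : ∀ t, Measurable (μ[w t | ℱ (t-1)]) := fun t =>
    (stronglyMeasurable_condExp.mono (ℱ.le (t-1))).measurable
  set X : Ω → ℝ := fun ω => Real.exp (a * ∑ t ∈ Icc 1 T, w t ω
      + b * ∑ t ∈ Icc 1 T, (μ[w t | ℱ (t-1)]) ω) with hX
  have hXm : Measurable X :=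
    Real.measurable_exp.comp
      (((Finset.measurable_sum _ (fun t _ => hwm t)).const_mul a).add
        ((Finset.measurable_sum _ (fun t _ => hEm t)).const_mul b))
  -- integrability of X, as in key_mgf
  have hw_int : ∀ t, Integrable (w t) μ := fun t =>
    (integrable_const R).mono' (hwm t).aestronglyMeasurable
      ((hbdd t).mono fun ω h => by
        rw [Real.norm_eq_abs, abs_of_nonneg h.1]; exact h.2)
  have hE_nonneg : ∀ t, 0 ≤ᵐ[μ] μ[w t | ℱ (t-1)] := fun t =>
    condExp_nonneg ((hbdd t).mono fun ω h => h.1)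
  have hE_le : ∀ t, μ[w t | ℱ (t-1)] ≤ᵐ[μ] fun _ => R := by
    intro t
    have h := condExp_mono (μ := μ) (m := ℱ (t-1)) (hw_int t) (integrable_const R)
      ((hbdd t).mono fun ω h => h.2)
    rwa [condExp_const (ℱ.le (t-1)) R] at h
  have hwae : ∀ᵐ ω ∂μ, ∀ t, w t ω ∈ Set.Icc 0 R := ae_all_iff.2 hbdd
  have hEae : ∀ᵐ ω ∂μ, ∀ t, 0 ≤ (μ[w t | ℱ (t-1)]) ω ∧ (μ[w t | ℱ (t-1)]) ω ≤ R :=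
    ae_all_iff.2 fun t => (hE_nonneg t).and (hE_le t)
  have hXbdd : ∀ᵐ ω ∂μ, ‖X ω‖ ≤ Real.exp ((|a| + |b|) * (T * R)) := by
    filter_upwards [hwae, hEae] with ω hw hE'
    have key : ∀ f : ℕ → Ω → ℝ, (∀ t, 0 ≤ f t ω ∧ f t ω ≤ R) →
        0 ≤ ∑ t ∈ Icc 1 T, f t ω ∧ ∑ t ∈ Icc 1 T, f t ω ≤ T * R := by
      intro f hf
      refine ⟨Finset.sum_nonneg fun t _ => (hf t).1, ?_⟩
      calc ∑ t ∈ Icc 1 T, f t ω ≤ ∑ t ∈ Icc 1 T, R :=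
            Finset.sum_le_sum fun t _ => (hf t).2
        _ = T * R := by
            rw [Finset.sum_const, Nat.card_Icc, Nat.add_sub_cancel, nsmul_eq_mul]
    obtain ⟨h1, h2⟩ := key w (fun t => ⟨(hw t).1, (hw t).2⟩)
    obtain ⟨h3, h4⟩ := key _ hE'
    rw [hX, Real.norm_eq_abs, Real.abs_exp, Real.exp_le_exp]
    nlinarith [le_abs_self a, neg_abs_le a, le_abs_self b, neg_abs_le b,
      mul_le_mul_of_nonneg_right (le_abs_self a) h1,
      mul_le_mul_of_nonneg_right (le_abs_self b) h3,
      mul_le_mul_of_nonneg_left h2 (abs_nonneg a),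
      mul_le_mul_of_nonneg_left h4 (abs_nonneg b)]
  have hX_int : Integrable X μ :=
    (integrable_const _).mono' hXm.aestronglyMeasurable hXbdd
  have hint : ∫ ω, X ω ∂μ ≤ 1 := key_mgf μ ℱ R hR w hadapted hbdd a b hab T
  -- Markov
  have hset : {ω | L ≤ a * ∑ t ∈ Icc 1 T, w t ω
      + b * ∑ t ∈ Icc 1 T, (μ[w t | ℱ (t-1)]) ω} = {ω | Real.exp L ≤ X ω} := by
    ext ω; simp [hX, Real.exp_le_exp]
  rw [hset]
  have hmar := mul_meas_ge_le_integral_of_nonneg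
    (ae_of_all μ fun ω => (Real.exp_pos _).le : 0 ≤ᵐ[μ] X) hX_int (Real.exp L)
  have hfin : μ {ω | Real.exp L ≤ X ω} ≠ ⊤ := measure_ne_top μ _
  have h1 : Real.exp L * (μ {ω | Real.exp L ≤ X ω}).toReal ≤ 1 := hmar.trans hint
  have htoReal : (μ {ω | Real.exp L ≤ X ω}).toReal ≤ Real.exp (-L) := by
    have hpos := Real.exp_pos L
    rw [Real.exp_neg, inv_eq_one_div, le_div_iff₀ hpos]
    linarith [h1]
  calc μ {ω | Real.exp L ≤ X ω} = ENNReal.ofReal ((μ {ω | Real.exp L ≤ X ω}).toReal) :=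
        (ENNReal.ofReal_toReal hfin).symm
    _ ≤ ENNReal.ofReal (Real.exp (-L)) := ENNReal.ofReal_le_ofReal htoReal

/-- multiplicative Freedman inequality. For an adapted
sequence `w t` with `0 ≤ w t ≤ R` a.s., with probability at least `1 - δ` both
`∑ w t ≤ (3/2) ∑ E[w t | ℱ (t-1)] + 4 R log(2/δ)` and
`∑ E[w t | ℱ (t-1)] ≤ 2 ∑ w t + 8 R log(2/δ)` hold. -/
theorem stmt_6 {Ω : Type*} {m0 : MeasurableSpace Ω} (μ : Measure Ω)
    [IsProbabilityMeasure μ] (ℱ : Filtration ℕ m0) (T : ℕ) (R δ : ℝ)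
    (hR : 0 < R) (hδ : δ ∈ Set.Ioo (0 : ℝ) 1)
    (w : ℕ → Ω → ℝ)
    (hadapted : ∀ t, Measurable[ℱ t] (w t))
    (hbdd : ∀ t, ∀ᵐ ω ∂μ, w t ω ∈ Set.Icc 0 R) :
    ENNReal.ofReal (1 - δ) ≤
      μ {ω |
        (∑ t ∈ Icc 1 T, w t ω ≤
            (3/2) * ∑ t ∈ Icc 1 T, (μ[w t | ℱ (t-1)]) ω + 4 * R * Real.log (2 / δ)) ∧
        (∑ t ∈ Icc 1 T, (μ[w t | ℱ (t-1)]) ω ≤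
            2 * ∑ t ∈ Icc 1 T, w t ω + 8 * R * Real.log (2 / δ))} := by
  obtain ⟨hδ0, hδ1⟩ := hδ
  set L := Real.log (2 / δ) with hLdef
  have hL : 0 < L := Real.log_pos (by rw [lt_div_iff₀ hδ0]; linarith)
  have hRne : R ≠ 0 := ne_of_gt hR
  -- the two exponential moment bounds
  have hab1 : ∀ x ∈ Set.Icc (0:ℝ) R, Real.exp ((1/(4*R)) * x) ≤ 1 + (-(-(3/(8*R)))) * x := by
    intro x hx
    have ht : x / R ∈ Set.Icc (0:ℝ) 1 :=
      ⟨div_nonneg hx.1 hR.le, (div_le_one hR).2 hx.2⟩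
    have h := exp_convex_bound (1/4) (x/R) ht
    have harg : (x/R) * (1/4) = (1/(4*R)) * x := by field_simp
    rw [harg] at h
    refine h.trans ?_
    have h2 : Real.exp (1/4 : ℝ) - 1 ≤ 1/3 := by linarith [exp_quarter_le]
    have hx0 : 0 ≤ x / R := ht.1
    have : (x/R) * (Real.exp (1/4) - 1) ≤ (x/R) * (3/8) := by
      apply mul_le_mul_of_nonneg_left (by linarith) hx0
    have heq : (x/R) * (3/8) = (-(-(3/(8*R)))) * x := by field_simp
    linarith [heq ▸ this]
  have hab2 : ∀ x ∈ Set.Icc (0:ℝ) R, Real.exp ((-(1/(4*R))) * x) ≤ 1 + (-(1/(8*R))) * x := by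
    intro x hx
    have ht : x / R ∈ Set.Icc (0:ℝ) 1 :=
      ⟨div_nonneg hx.1 hR.le, (div_le_one hR).2 hx.2⟩
    have h := exp_convex_bound (-(1/4)) (x/R) ht
    have harg : (x/R) * (-(1/4)) = (-(1/(4*R))) * x := by field_simp
    rw [harg] at h
    refine h.trans ?_
    have h2 : Real.exp (-(1/4) : ℝ) - 1 ≤ -(1/8) := by linarith [exp_neg_quarter_le]
    have hx0 : 0 ≤ x / R := ht.1
    have : (x/R) * (Real.exp (-(1/4)) - 1) ≤ (x/R) * (-(1/8)) := by
      apply mul_le_mul_of_nonneg_left h2 hx0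
    have heq : (x/R) * (-(1/8)) = (-(1/(8*R))) * x := by field_simp
    linarith [heq ▸ this]
  have hmar1 := key_markov μ ℱ R hR w hadapted hbdd (1/(4*R)) (-(3/(8*R))) hab1 T L
  have hmar2 := key_markov μ ℱ R hR w hadapted hbdd (-(1/(4*R))) (1/(8*R)) hab2 T L
  have hexpL : Real.exp (-L) = δ/2 := by
    rw [hLdef, Real.exp_neg, Real.exp_log (by positivity), inv_div]
  rw [hexpL] at hmar1 hmar2
  -- measurability
  have hwm : ∀ t, Measurable (w t) := fun t => (hadapted t).mono (ℱ.le t) le_rfl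
  have hEm : ∀ t, Measurable (μ[w t | ℱ (t-1)]) := fun t =>
    (stronglyMeasurable_condExp.mono (ℱ.le (t-1))).measurable
  have hSwm : Measurable (fun ω => ∑ t ∈ Icc 1 T, w t ω) :=
    Finset.measurable_sum _ (fun t _ => hwm t)
  have hSEm : Measurable (fun ω => ∑ t ∈ Icc 1 T, (μ[w t | ℱ (t-1)]) ω) :=
    Finset.measurable_sum _ (fun t _ => hEm t)
  set good := {ω |
        (∑ t ∈ Icc 1 T, w t ω ≤
            (3/2) * ∑ t ∈ Icc 1 T, (μ[w t | ℱ (t-1)]) ω + 4 * R * L) ∧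
        (∑ t ∈ Icc 1 T, (μ[w t | ℱ (t-1)]) ω ≤
            2 * ∑ t ∈ Icc 1 T, w t ω + 8 * R * L)} with hgood_def
  have hgood_meas : MeasurableSet good := by
    rw [hgood_def, Set.setOf_and]
    exact (measurableSet_le hSwm ((hSEm.const_mul _).add_const _)).inter
      (measurableSet_le hSEm ((hSwm.const_mul _).add_const _))
  -- complement inclusion
  have hsub : goodᶜ ⊆
      {ω | L ≤ (1/(4*R)) * ∑ t ∈ Icc 1 T, w t ω
          + (-(3/(8*R))) * ∑ t ∈ Icc 1 T, (μ[w t | ℱ (t-1)]) ω} ∪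
      {ω | L ≤ (-(1/(4*R))) * ∑ t ∈ Icc 1 T, w t ω
          + (1/(8*R)) * ∑ t ∈ Icc 1 T, (μ[w t | ℱ (t-1)]) ω} := by
    intro ω hω
    rw [hgood_def] at hω
    simp only [Set.mem_compl_iff, Set.mem_setOf_eq, not_and_or, not_le] at hω
    set Sw := ∑ t ∈ Icc 1 T, w t ω
    set SE := ∑ t ∈ Icc 1 T, (μ[w t | ℱ (t-1)]) ω
    rcases hω with h | h
    · left
      show L ≤ (1/(4*R)) * Sw + (-(3/(8*R))) * SE
      have key : L ≤ (2*Sw - 3*SE) / (8*R) := by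
        rw [le_div_iff₀ (by linarith)]; linarith
      have heq : (2*Sw - 3*SE) / (8*R) = (1/(4*R)) * Sw + (-(3/(8*R))) * SE := by
        field_simp; ring
      linarith [heq ▸ key]
    · right
      show L ≤ (-(1/(4*R))) * Sw + (1/(8*R)) * SE
      have key : L ≤ (SE - 2*Sw) / (8*R) := by
        rw [le_div_iff₀ (by linarith)]; linarith
      have heq : (SE - 2*Sw) / (8*R) = (-(1/(4*R))) * Sw + (1/(8*R)) * SE := by
        field_simp; ring
      linarith [heq ▸ key]
  have hcomp : μ goodᶜ ≤ ENNReal.ofReal δ := by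
    calc μ goodᶜ ≤ μ (_ ∪ _) := measure_mono hsub
      _ ≤ _ + _ := measure_union_le _ _
      _ ≤ ENNReal.ofReal (δ/2) + ENNReal.ofReal (δ/2) := add_le_add hmar1 hmar2
      _ = ENNReal.ofReal δ := by
          rw [← ENNReal.ofReal_add (by linarith) (by linarith)]; norm_num
  have hadd : μ good + μ goodᶜ = 1 := by
    rw [measure_add_measure_compl hgood_meas, measure_univ]
  have hfinal : ENNReal.ofReal (1 - δ) + μ goodᶜ ≤ μ good + μ goodᶜ := by
    calc ENNReal.ofReal (1 - δ) + μ goodᶜ ≤ ENNReal.ofReal (1 - δ) + ENNReal.ofReal δ :=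
          add_le_add le_rfl hcomp
      _ = ENNReal.ofReal 1 := by
          rw [← ENNReal.ofReal_add (by linarith) (by linarith)]; norm_num
      _ = 1 := ENNReal.ofReal_one
      _ = μ good + μ goodᶜ := hadd.symm
  exact ENNReal.le_of_add_le_add_right (measure_ne_top μ _) hfinal
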